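/- If b ∈ S⁰ for the shooting problem (so f(t;b) is increasing and nonpositive on (t₀,∞)), and additionally g(t) → g(∞) and h(t) → h(∞) > 0 as t → ∞ with R(s) < 0 for s < 0, then f(t;b) → 0 as t → ∞. -/

import Mathlib

open Filter

theorem stmt10 (g h R f : ℝ → ℝ) (t₀ a ginf hinf : ℝ) (ha : 0 < a)
    (hg : Continuous g) (hgnn : ∀ t, 0 ≤ g t)
    (hh : Continuous h) (hhpos : ∀ t, 0 < h t)
    (hRcont : Continuous R) (hRneg : ∀ s < (0:ℝ), R s < 0)
    (hglim : Tendsto g atTop (nhds ginf)) (hhlim : Tendsto h atTop (nhds hinf))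
    (hinfpos : 0 < hinf)
    (hf1 : ∀ t, HasDerivAt f (deriv f t) t)
    (hf2 : ∀ t, HasDerivAt (deriv f) (deriv (deriv f) t) t)
    (hode : ∀ t ≥ t₀, deriv (deriv f) t - g t * deriv f t = h t * R (f t))
    (hinit : f t₀ = -a)
    (hS0 : ∀ t > t₀, 0 < deriv f t ∧ f t ≤ 0) :
    Tendsto f atTop (nhds 0) := by
  have hfd : Differentiable ℝ f := fun t => (hf1 t).differentiableAt
  have hfd' : Differentiable ℝ (deriv f) := fun t => (hf2 t).differentiableAt
  have hfc : Continuous f := hfd.continuous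
  have hf'c : Continuous (deriv f) := hfd'.continuous
  set t₁ := t₀ + 1 with ht₁def
  have ht₁ : t₀ < t₁ := lt_add_one t₀
  -- f is monotone on [t₁, ∞)
  have hmono : MonotoneOn f (Set.Ici t₁) := by
    apply monotoneOn_of_deriv_nonneg (convex_Ici t₁) hfc.continuousOn hfd.differentiableOn
    intro x hx
    rw [interior_Ici] at hx
    exact (hS0 x (ht₁.trans hx)).1.le
  set F := fun t => f (max t t₁) with hFdef
  have hFmono : Monotone F := fun s t hst =>
    hmono (le_max_right s t₁) (le_max_right t t₁) (max_le_max hst le_rfl)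
  have hFbdd : BddAbove (Set.range F) := by
    refine ⟨0, ?_⟩
    rintro _ ⟨t, rfl⟩
    exact (hS0 (max t t₁) (lt_of_lt_of_le ht₁ (le_max_right t t₁))).2
  set η := ⨆ t, F t with hηdef
  have hFlim : Tendsto F atTop (nhds η) := tendsto_atTop_ciSup hFmono hFbdd
  have hFeq : F =ᶠ[atTop] f := by
    filter_upwards [eventually_ge_atTop t₁] with t ht
    simp [hFdef, max_eq_left ht]
  have hflim : Tendsto f atTop (nhds η) := hFlim.congr' hFeq
  have hηle : η ≤ 0 :=
    ciSup_le fun t => (hS0 (max t t₁) (lt_of_lt_of_le ht₁ (le_max_right t t₁))).2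
  suffices hη0 : η = 0 by rwa [hη0] at hflim
  by_contra hne
  have hηneg : η < 0 := lt_of_le_of_ne hηle hne
  -- eventual bounds
  set c := hinf * R η with hcdef
  clear_value c
  have hcneg : c < 0 := by rw [hcdef]; exact mul_neg_of_pos_of_neg hinfpos (hRneg η hηneg)
  have hRflim : Tendsto (fun t => h t * R (f t)) atTop (nhds c) := by
    rw [hcdef]; exact hhlim.mul ((hRcont.tendsto η).comp hflim)
  set c' := c / 2 with hc'def
  clear_value c'
  have hc' : c' < 0 := by rw [hc'def]; linarith
  have hev1 : ∀ᶠ t in atTop, h t * R (f t) ≤ c' :=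
    hRflim.eventually_le_const (by rw [hc'def]; linarith)
  have hginf : 0 ≤ ginf := ge_of_tendsto' hglim hgnn
  set M := ginf + 1 with hMdef
  clear_value M
  have hMpos : 0 < M := by rw [hMdef]; linarith
  have hev2 : ∀ᶠ t in atTop, g t ≤ M := hglim.eventually_le_const (by rw [hMdef]; exact lt_add_one ginf)
  set δ := -c' / (2 * M) with hδdef
  clear_value δ
  have hδpos : 0 < δ := hδdef ▸ div_pos (by linarith) (by linarith)
  have hkey : M * δ + c' = c' / 2 := by
    rw [hδdef]
    field_simp
    ring
  obtain ⟨T0, hT0⟩ := eventually_atTop.mp (hev1.and hev2)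
  set T := max T0 t₁ with hTdef
  have hTt₁ : t₁ ≤ T := hTdef ▸ le_max_right _ _
  have hTt₀ : t₀ < T := lt_of_lt_of_le ht₁ hTt₁
  have hTprop : ∀ t, T ≤ t → h t * R (f t) ≤ c' ∧ g t ≤ M := fun t ht =>
    hT0 t (le_trans (hTdef ▸ le_max_left _ _) ht)
  clear_value T
  -- second derivative bound when deriv f ≤ δ
  have hdd : ∀ t, T ≤ t → deriv f t ≤ δ → deriv (deriv f) t ≤ c' / 2 := by
    intro t ht hle
    have h0 : t₀ < t := lt_of_lt_of_le hTt₀ ht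
    have hodet := hode t h0.le
    obtain ⟨hb1, hb2⟩ := hTprop t ht
    have hmul : g t * deriv f t ≤ M * δ :=
      mul_le_mul hb2 hle (hS0 t h0).1.le hMpos.le
    linarith [hkey, hmul, hb1, hodet]
  -- there is a point where deriv f < δ
  have hstep3 : ∃ t₂, T ≤ t₂ ∧ deriv f t₂ < δ := by
    by_contra hcon
    push_neg at hcon
    have hq : MonotoneOn (fun t => f t - δ * t) (Set.Ici T) := by
      apply monotoneOn_of_deriv_nonneg (convex_Ici T) (by fun_prop)
        (fun x _ => ((hf1 x).sub (by simpa using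
          (hasDerivAt_id x).const_mul δ)).differentiableAt.differentiableWithinAt)
      intro x hx
      rw [interior_Ici] at hx
      have hd : HasDerivAt (fun t => f t - δ * t) (deriv f x - δ) x :=
        (hf1 x).sub (by simpa using (hasDerivAt_id x).const_mul δ)
      rw [show deriv (f - HMul.hMul δ) x = deriv f x - δ from hd.deriv]
      have := hcon x hx.le
      linarith
    set t := T + (δ - f T) / δ with htdef
    clear_value t
    have hfT : f T ≤ 0 := (hS0 T hTt₀).2
    have htT : T ≤ t := by
      have h1 : 0 ≤ (δ - f T) / δ := div_nonneg (by linarith) hδpos.le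
      linarith [htdef, h1]
    have hft : f t ≤ 0 := (hS0 t (lt_of_lt_of_le hTt₀ htT)).2
    have hmono2 := hq Set.self_mem_Ici (Set.mem_Ici.mpr htT) htT
    have hδt : δ * (t - T) = δ - f T := by
      rw [htdef]
      field_simp
      ring
    simp only at hmono2
    have hexp : δ * (t - T) = δ * t - δ * T := by ring
    linarith [hmono2, hδt, hexp, hft, hδpos]
  obtain ⟨t₂, ht₂T, ht₂δ⟩ := hstep3
  -- deriv f stays below δ after t₂
  have hlt : ∀ t, t₂ ≤ t → deriv f t < δ := by
    by_contra hcon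
    push_neg at hcon
    obtain ⟨s0, hs0t, hs0δ⟩ := hcon
    set K := Set.Ici t₂ ∩ deriv f ⁻¹' Set.Ici δ with hKdef
    have hKcl : IsClosed K := isClosed_Ici.inter (isClosed_Ici.preimage hf'c)
    have hKne : K.Nonempty := ⟨s0, hs0t, hs0δ⟩
    have hKbdd : BddBelow K := ⟨t₂, fun x hx => hx.1⟩
    set s := sInf K with hsdef
    have hsK : s ∈ K := hKcl.csInf_mem hKne hKbdd
    have hst₂ : t₂ < s := by
      rcases lt_or_eq_of_le (Set.mem_Ici.mp hsK.1 : t₂ ≤ s) with h' | h'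
      · exact h'
      · exact absurd (h' ▸ hsK.2 : δ ≤ deriv f t₂) (not_le.mpr ht₂δ)
    have hlow : ∀ x, t₂ ≤ x → x < s → deriv f x < δ := by
      intro x hx hxs
      by_contra hge
      push_neg at hge
      exact absurd (csInf_le hKbdd ⟨hx, hge⟩) (not_le.mpr hxs)
    have hanti : AntitoneOn (deriv f) (Set.Icc t₂ s) := by
      apply antitoneOn_of_deriv_nonpos (convex_Icc t₂ s) hf'c.continuousOn
        hfd'.differentiableOn
      intro x hx
      rw [interior_Icc] at hx
      have := hdd x (le_trans ht₂T hx.1.le) (hlow x hx.1.le hx.2).le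
      linarith
    have := hanti (Set.mem_Icc.mpr ⟨le_rfl, hst₂.le⟩) (Set.mem_Icc.mpr ⟨hst₂.le, le_rfl⟩) hst₂.le
    have hδs : δ ≤ deriv f s := hsK.2
    linarith
  -- hence deriv (deriv f) ≤ c'/2 < 0 after t₂, contradiction
  have hanti2 : AntitoneOn (fun t => deriv f t - c' / 2 * t) (Set.Ici t₂) := by
    apply antitoneOn_of_deriv_nonpos (convex_Ici t₂) (by fun_prop)
      (fun x _ => ((hf2 x).sub (by simpa using
        (hasDerivAt_id x).const_mul (c' / 2))).differentiableAt.differentiableWithinAt)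
    intro x hx
    rw [interior_Ici] at hx
    have hd : HasDerivAt (fun t => deriv f t - c' / 2 * t) (deriv (deriv f) x - c' / 2) x :=
      (hf2 x).sub (by simpa using (hasDerivAt_id x).const_mul (c' / 2))
    rw [show deriv (deriv f - HMul.hMul (c' / 2)) x = deriv (deriv f) x - c' / 2 from hd.deriv]
    have := hdd x (le_trans ht₂T hx.le) (hlt x hx.le).le
    linarith
  set d := deriv f t₂ with hddef
  clear_value d
  have hdpos : 0 < d := hddef ▸ (hS0 t₂ (lt_of_lt_of_le hTt₀ ht₂T)).1
  set t₃ := t₂ + 2 * d / (-c') + 1 with ht₃def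
  clear_value t₃
  have ht₃ : t₂ ≤ t₃ := by
    have h1 : 0 ≤ 2 * d / (-c') := div_nonneg (by linarith) (by linarith)
    linarith [ht₃def, h1]
  have h5 := hanti2 Set.self_mem_Ici (Set.mem_Ici.mpr ht₃) ht₃
  simp only at h5
  have hpos3 : 0 < deriv f t₃ :=
    (hS0 t₃ (lt_of_lt_of_le (lt_of_lt_of_le hTt₀ ht₂T) ht₃)).1
  have hc'ne : c' ≠ 0 := ne_of_lt hc'
  have harith : c' / 2 * (t₃ - t₂) = -d + c' / 2 := by
    have he : t₃ - t₂ = 2 * d / (-c') + 1 := by rw [ht₃def]; ring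
    have h2 : c' / 2 * (2 * d / (-c')) = -d := by
      field_simp
    rw [he, mul_add]
    rw [h2]
    ring
  have hexp : c' / 2 * (t₃ - t₂) = c' / 2 * t₃ - c' / 2 * t₂ := by ring
  linarith [h5, harith, hexp, hpos3, hc', hdpos]
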